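/- For positive semidefinite matrices A and B, Tr(AB) ≤ ‖A^{1/2} B^{1/2}‖₁², i.e., the linear overlap is bounded above by the square of the Uhlmann fidelity. -/

import Mathlib

open Matrix
open scoped ComplexOrder

/-- Square root of a positive semidefinite matrix (old Mathlib definition, since removed). -/
noncomputable def Matrix.PosSemidef.sqrt {n 𝕜 : Type*} [Fintype n] [DecidableEq n] [RCLike 𝕜]
    {A : Matrix n n 𝕜} (hA : A.PosSemidef) : Matrix n n 𝕜 :=
  hA.1.eigenvectorUnitary.1 * diagonal ((↑) ∘ (√·) ∘ hA.1.eigenvalues) *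
    (star hA.1.eigenvectorUnitary : Matrix n n 𝕜)

lemma Matrix.PosSemidef.posSemidef_sqrt {n : Type*} [Fintype n] [DecidableEq n]
    {A : Matrix n n ℂ} (hA : A.PosSemidef) : hA.sqrt.PosSemidef := by
  unfold Matrix.PosSemidef.sqrt
  have hd : (diagonal ((↑) ∘ (√·) ∘ hA.1.eigenvalues) : Matrix n n ℂ).PosSemidef :=
    posSemidef_diagonal_iff.mpr (fun i => by
      simp only [Function.comp_apply]
      exact_mod_cast Real.sqrt_nonneg _)
  have := hd.mul_mul_conjTranspose_same (hA.1.eigenvectorUnitary : Matrix n n ℂ)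
  rw [← Matrix.star_eq_conjTranspose] at this
  exact this

lemma Matrix.PosSemidef.sqrt_mul_self {n : Type*} [Fintype n] [DecidableEq n]
    {A : Matrix n n ℂ} (hA : A.PosSemidef) : hA.sqrt * hA.sqrt = A := by
  unfold Matrix.PosSemidef.sqrt
  have hU := (Matrix.mem_unitaryGroup_iff').mp (hA.1.eigenvectorUnitary).2
  calc _ = (hA.1.eigenvectorUnitary : Matrix n n ℂ)
        * (diagonal ((↑) ∘ (√·) ∘ hA.1.eigenvalues)
          * ((star (hA.1.eigenvectorUnitary : Matrix n n ℂ))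
            * (hA.1.eigenvectorUnitary : Matrix n n ℂ))
          * diagonal ((↑) ∘ (√·) ∘ hA.1.eigenvalues))
        * star (hA.1.eigenvectorUnitary : Matrix n n ℂ) := by simp only [Matrix.mul_assoc]; rfl
    _ = A := by
      rw [hU, Matrix.mul_one, Matrix.diagonal_mul_diagonal]
      conv_rhs => rw [hA.1.spectral_theorem, Unitary.conjStarAlgAut_apply]
      congr 3
      funext i
      simp only [Function.comp_apply]
      rw [← Complex.ofReal_mul, Real.mul_self_sqrt (hA.eigenvalues_nonneg i)]
      rfl

/-- Trace norm `‖X‖₁ = Tr √(XᴴX)`. -/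
noncomputable def traceNorm {n : Type*} [Fintype n] [DecidableEq n] (X : Matrix n n ℂ) : ℝ :=
  ((Matrix.posSemidef_conjTranspose_mul_self X).sqrt.trace).re

/-- Fractional power `A^s` of a positive semidefinite matrix, defined spectrally with the
convention `0 ^ s = 0` for all real `s`. -/
noncomputable def Matrix.PosSemidef.rpow {n : Type*} [Fintype n] [DecidableEq n]
    {A : Matrix n n ℂ} (hA : A.PosSemidef) (s : ℝ) : Matrix n n ℂ :=
  hA.1.cfc (fun x => if x = 0 then 0 else x ^ s)

/-- Matrix logarithm of a positive semidefinite matrix, defined spectrally with the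
convention `log 0 = 0` on the kernel. -/
noncomputable def Matrix.PosSemidef.log {n : Type*} [Fintype n] [DecidableEq n]
    {A : Matrix n n ℂ} (hA : A.PosSemidef) : Matrix n n ℂ :=
  hA.1.cfc Real.log

lemma herm_trace_eq {n : Type*} [Fintype n] [DecidableEq n] {S : Matrix n n ℂ}
    (hS : S.IsHermitian) : S.trace = ∑ i, (hS.eigenvalues i : ℂ) := by
  conv_lhs => rw [hS.spectral_theorem, Unitary.conjStarAlgAut_apply]
  rw [Matrix.trace_mul_cycle,
    (Matrix.mem_unitaryGroup_iff').mp (hS.eigenvectorUnitary).2, Matrix.one_mul,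
    Matrix.trace_diagonal]
  simp

lemma herm_sq_trace_eq {n : Type*} [Fintype n] [DecidableEq n] {S : Matrix n n ℂ}
    (hS : S.IsHermitian) : (S * S).trace = ∑ i, ((hS.eigenvalues i : ℂ)) ^ 2 := by
  conv_lhs => rw [hS.spectral_theorem, Unitary.conjStarAlgAut_apply]
  rw [show ((hS.eigenvectorUnitary : Matrix n n ℂ) * diagonal (RCLike.ofReal ∘ hS.eigenvalues)
      * star (hS.eigenvectorUnitary : Matrix n n ℂ))
      * ((hS.eigenvectorUnitary : Matrix n n ℂ) * diagonal (RCLike.ofReal ∘ hS.eigenvalues)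
      * star (hS.eigenvectorUnitary : Matrix n n ℂ))
      = (hS.eigenvectorUnitary : Matrix n n ℂ)
        * (diagonal (RCLike.ofReal ∘ hS.eigenvalues)
          * ((star (hS.eigenvectorUnitary : Matrix n n ℂ)
            * (hS.eigenvectorUnitary : Matrix n n ℂ))
          * diagonal (RCLike.ofReal ∘ hS.eigenvalues)))
        * star (hS.eigenvectorUnitary : Matrix n n ℂ) by
      simp only [Matrix.mul_assoc]]
  rw [(Matrix.mem_unitaryGroup_iff').mp (hS.eigenvectorUnitary).2, Matrix.one_mul,
    Matrix.diagonal_mul_diagonal, Matrix.trace_mul_cycle,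
    (Matrix.mem_unitaryGroup_iff').mp (hS.eigenvectorUnitary).2, Matrix.one_mul,
    Matrix.trace_diagonal]
  simp [sq]

lemma key {n : Type*} [Fintype n] [DecidableEq n] {S : Matrix n n ℂ}
    (hS : S.PosSemidef) : ((S * S).trace).re ≤ ((S.trace).re) ^ 2 := by
  rw [herm_trace_eq hS.1, herm_sq_trace_eq hS.1]
  have h1 : ((∑ i, (hS.1.eigenvalues i : ℂ))).re = ∑ i, hS.1.eigenvalues i := by
    rw [Complex.re_sum]; norm_num
  have h2 : ((∑ i, ((hS.1.eigenvalues i : ℂ)) ^ 2)).re = ∑ i, (hS.1.eigenvalues i) ^ 2 := by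
    rw [Complex.re_sum]
    refine Finset.sum_congr rfl fun i _ => ?_
    rw [← Complex.ofReal_pow, Complex.ofReal_re]
  rw [h1, h2]
  exact Finset.sum_sq_le_sq_sum_of_nonneg fun i _ => hS.eigenvalues_nonneg i

/-- Linear overlap is bounded by the square of the Uhlmann fidelity:
`Tr(AB) ≤ ‖A^{1/2} B^{1/2}‖₁²` for positive semidefinite `A`, `B`. -/
theorem stmt1 {n : Type*} [Fintype n] [DecidableEq n]
    {A B : Matrix n n ℂ} (hA : A.PosSemidef) (hB : B.PosSemidef) :
    ((A * B).trace).re ≤ (traceNorm (hA.sqrt * hB.sqrt)) ^ 2 := by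
  set X := hA.sqrt * hB.sqrt with hX
  have hP := Matrix.posSemidef_conjTranspose_mul_self X
  have h1 : Xᴴ * X = hB.sqrt * A * hB.sqrt := by
    rw [hX, Matrix.conjTranspose_mul, hB.posSemidef_sqrt.1, hA.posSemidef_sqrt.1,
      Matrix.mul_assoc, ← Matrix.mul_assoc hA.sqrt, hA.sqrt_mul_self, Matrix.mul_assoc]
  have h2 : (Xᴴ * X).trace = (A * B).trace := by
    rw [h1, Matrix.trace_mul_cycle, hB.sqrt_mul_self,
      Matrix.trace_mul_comm]
  have h3 : hP.sqrt * hP.sqrt = Xᴴ * X := hP.sqrt_mul_self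
  have := key hP.posSemidef_sqrt
  rw [h3, h2] at this
  exact this
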